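/- arXiv:1804.06138 — 2 statements merged into one kernel-verified Lean document; each statement's English description precedes it below -/
import Mathlib

section
/- Let q be a prime power and n a positive integer with gcd(n,q) = 1. Let C be a cyclic code of length n over F_{q^2}, i.e., an ideal of F_{q^2}[x]/⟨x^n − 1⟩, with generator polynomial g(x) (the unique monic divisor of x^n − 1 whose image generates C). Then C is Hermitian complementary dual, i.e., C ∩ C^{⊥_H} = {0}, if and only if g(x) = g†(x). -/
open Polynomial

/-- The reciprocal polynomial `f*(x) = x^(deg f) * f(0)⁻¹ * f(1/x)`. -/
noncomputable def crecip {F : Type*} [Field F] (f : F[X]) : F[X] :=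
  C (f.coeff 0)⁻¹ * f.reverse

/-- The conjugate-reciprocal polynomial `f†`, obtained by applying the
conjugation `a ↦ a ^ q` to each coefficient of `f*`. -/
noncomputable def cdagger {F : Type*} [Field F] (q : ℕ) (f : F[X]) : F[X] :=
  (crecip f).sum fun i a => C (a ^ q) * X ^ i

/-- A polynomial is SCRIM if it is monic, irreducible, and self-conjugate-reciprocal. -/
def IsSCRIM {F : Type*} [Field F] (q : ℕ) (f : F[X]) : Prop :=
  f.Monic ∧ Irreducible f ∧ f = cdagger q f

/-- The set `Ω_{q²,n}` of SCRIM factors of `x^n - 1` over `F = F_{q²}`. -/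
def scrimFactors (F : Type*) [Field F] (q n : ℕ) : Set F[X] :=
  {f | IsSCRIM q f ∧ f ∣ X ^ n - 1}

/-- The codewords of a cyclic code, viewed as the polynomials of degree `< n`
in the ideal `C` of `F[x]` corresponding to the ideal `C` of `F[x]/⟨x^n - 1⟩`. -/
def codewords {F : Type*} [Field F] (C : Ideal F[X]) (n : ℕ) : Set F[X] :=
  {f | f ∈ C ∧ f.degree < (n : WithBot ℕ)}

/-- The Hermitian dual code `C^⊥H`, as a set of polynomials of degree `< n`. -/
def hermDual {F : Type*} [Field F] (q : ℕ) (C : Ideal F[X]) (n : ℕ) : Set F[X] :=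
  {u | u.degree < (n : WithBot ℕ) ∧ ∀ v ∈ C, v.degree < (n : WithBot ℕ) →
      ∑ i ∈ Finset.range n, u.coeff i * (v.coeff i) ^ q = 0}

section Aux

variable {F : Type*} [Field F] {q : ℕ}

theorem cdagger_eq_map (σ : F →+* F) (hσ : ∀ x : F, σ x = x ^ q) (f : F[X]) :
    cdagger q f = (crecip f).map σ := by
  unfold cdagger Polynomial.map
  rw [eval₂_eq_sum, Polynomial.sum_def, Polynomial.sum_def]
  exact Finset.sum_congr rfl fun i _ => by simp [hσ]

theorem cdagger_eq (σ : F →+* F) (hσ : ∀ x : F, σ x = x ^ q) (f : F[X]) :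
    cdagger q f = C ((σ (f.coeff 0))⁻¹) * (f.map σ).reverse := by
  rw [cdagger_eq_map σ hσ, crecip, Polynomial.map_mul, map_C, map_inv₀]
  congr 1
  rw [reverse, reverse, natDegree_map, reflect_map]

theorem crecip_mul (f h : F[X]) (hf : f.coeff 0 ≠ 0) (hh : h.coeff 0 ≠ 0) :
    crecip (f * h) = crecip f * crecip h := by
  have hf0 : f ≠ 0 := fun hc => by simp [hc] at hf
  have hh0 : h ≠ 0 := fun hc => by simp [hc] at hh
  rw [crecip, crecip, crecip, reverse_mul (mul_ne_zero (leadingCoeff_ne_zero.mpr hf0)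
    (leadingCoeff_ne_zero.mpr hh0)), mul_coeff_zero, mul_inv, C_mul]
  ring

theorem cdagger_mul (σ : F →+* F) (hσ : ∀ x : F, σ x = x ^ q) (f h : F[X])
    (hf : f.coeff 0 ≠ 0) (hh : h.coeff 0 ≠ 0) :
    cdagger q (f * h) = cdagger q f * cdagger q h := by
  rw [cdagger_eq_map σ hσ, cdagger_eq_map σ hσ, cdagger_eq_map σ hσ,
    crecip_mul f h hf hh, Polynomial.map_mul]

theorem crecip_X_pow_sub_one {n : ℕ} (hn : 0 < n) :
    crecip ((X : F[X]) ^ n - 1) = X ^ n - 1 := by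
  have h0 : ((X : F[X]) ^ n - 1).coeff 0 = -1 := by
    simp [coeff_X_pow, hn.ne]
  have hnat : ((X : F[X]) ^ n - 1).natDegree = n := by
    rw [← C_1, natDegree_X_pow_sub_C]
  have hrev : ((X : F[X]) ^ n - 1).reverse = 1 - X ^ n := by
    rw [reverse, hnat, reflect_sub, ← pow_zero (X : F[X]), reflect_monomial,
      reflect_monomial, revAt_le (le_refl n), revAt_le (Nat.zero_le n)]
    simp
  rw [crecip, h0, hrev, inv_neg, inv_one, map_neg, C_1]
  ring

theorem cdagger_X_pow_sub_one (σ : F →+* F) (hσ : ∀ x : F, σ x = x ^ q) {n : ℕ} (hn : 0 < n) :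
    cdagger q ((X : F[X]) ^ n - 1) = X ^ n - 1 := by
  rw [cdagger_eq_map σ hσ, crecip_X_pow_sub_one hn, Polynomial.map_sub,
    Polynomial.map_pow, map_X, Polynomial.map_one]

theorem key_sum (u G : F[X]) {n k : ℕ} (hdk : G.natDegree + k < n) :
    ∑ i ∈ Finset.range n, u.coeff i * (G * X ^ k).coeff i
      = (u * G.reverse).coeff (G.natDegree + k) := by
  rw [coeff_mul, Finset.Nat.sum_antidiagonal_eq_sum_range_succ_mk]
  rw [← Finset.sum_subset (Finset.range_subset_range.mpr
      (show G.natDegree + k + 1 ≤ n by omega)) (fun i _ hi => ?_)]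
  · refine Finset.sum_congr rfl fun i hi => ?_
    rw [Finset.mem_range] at hi
    show u.coeff i * (G * X ^ k).coeff i
        = u.coeff i * G.reverse.coeff (G.natDegree + k - i)
    rw [coeff_mul_X_pow']
    by_cases hik : k ≤ i
    · rw [if_pos hik, coeff_reverse,
        revAt_le (show G.natDegree + k - i ≤ G.natDegree by omega),
        show G.natDegree - (G.natDegree + k - i) = i - k by omega]
    · rw [if_neg hik, mul_zero,
        show G.reverse.coeff (G.natDegree + k - i) = 0 from
          coeff_eq_zero_of_natDegree_lt
            (lt_of_le_of_lt (reverse_natDegree_le G) (by omega)), mul_zero]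
  · rw [Finset.mem_range, not_lt] at hi
    rw [coeff_mul_X_pow', if_pos (show k ≤ i by omega),
      coeff_eq_zero_of_natDegree_lt (show G.natDegree < i - k by omega), mul_zero]

end Aux

theorem stmt16 {q n : ℕ} (hq : IsPrimePow q)
    {F : Type*} [Field F] [Fintype F] (hF : Fintype.card F = q ^ 2)
    (hn : 0 < n) (hgcd : Nat.Coprime n q) (C : Ideal F[X]) (g : F[X])
    (hg : g.Monic) (hgd : g ∣ X ^ n - 1) (hC : C = Ideal.span {g}) :
    codewords C n ∩ hermDual q C n = {0} ↔ g = cdagger q g := by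
  classical
  obtain ⟨p, e, hp, he, rfl⟩ : ∃ p e, Nat.Prime p ∧ 0 < e ∧ p ^ e = q := by
    obtain ⟨p, e, hp, he, h⟩ := hq
    exact ⟨p, e, Nat.prime_iff.mpr hp, he, h⟩
  -- characteristic
  have hrp : (ringChar F).Prime := CharP.char_is_prime F (ringChar F)
  obtain ⟨m, -, hcard⟩ := FiniteField.card F (ringChar F)
  have hrpp : ringChar F = p := by
    have h1 : (ringChar F) ^ (m : ℕ) = p ^ (2 * e) := by
      rw [← hcard, hF]; ring
    have h2 : ringChar F ∣ p ^ (2 * e) := by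
      rw [← h1]; exact dvd_pow_self _ m.pos.ne'
    exact (Nat.prime_dvd_prime_iff_eq hrp hp).mp (hrp.dvd_of_dvd_pow h2)
  haveI : CharP F p := hrpp ▸ ringChar.charP F
  haveI : Fact p.Prime := ⟨hp⟩
  set σ : F →+* F := iterateFrobenius F p e with hσdef
  have hσ : ∀ x : F, σ x = x ^ p ^ e := fun x => iterateFrobenius_def ..
  -- basic facts
  have hXn1 : ((X : F[X]) ^ n - 1).natDegree = n := by
    rw [← C_1, natDegree_X_pow_sub_C]
  have hXnM : ((X : F[X]) ^ n - 1).Monic := by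
    rw [← C_1]; exact monic_X_pow_sub_C 1 hn.ne'
  have hXn0 : ((X : F[X]) ^ n - 1) ≠ 0 := hXnM.ne_zero
  have hXnc0 : ((X : F[X]) ^ n - 1).coeff 0 = -1 := by
    simp [coeff_X_pow, hn.ne]
  have hgne : g ≠ 0 := hg.ne_zero
  have hg0 : g.coeff 0 ≠ 0 := by
    intro hc
    have : (X : F[X]) ∣ X ^ n - 1 := dvd_trans (X_dvd_iff.mpr hc) hgd
    rw [X_dvd_iff, hXnc0] at this
    exact (neg_ne_zero.mpr one_ne_zero) this
  obtain ⟨h, hgh⟩ := id hgd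
  have hh0 : h.coeff 0 ≠ 0 := by
    intro hc
    rw [show ((X : F[X]) ^ n - 1).coeff 0 = (g * h).coeff 0 from by rw [← hgh],
      mul_coeff_zero, hc, mul_zero] at hXnc0
    exact (neg_ne_zero.mpr one_ne_zero) hXnc0.symm
  have hhne : h ≠ 0 := fun hc => by simp [hc] at hh0
  set d := g.natDegree with hdDef
  have hdn : d ≤ n := by
    have := natDegree_le_of_dvd hgd hXn0
    rwa [hXn1] at this
  have hhdeg : h.natDegree = n - d := by
    have : ((X : F[X]) ^ n - 1).natDegree = g.natDegree + h.natDegree := by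
      rw [hgh, natDegree_mul hgne hhne]
    rw [hXn1] at this
    omega
  -- the conjugate-reciprocal pair
  set gd := cdagger (p ^ e) g with hgdDef
  set hd := cdagger (p ^ e) h with hhdDef
  have hmul : gd * hd = X ^ n - 1 := by
    rw [hgdDef, hhdDef, ← cdagger_mul σ hσ g h hg0 hh0, ← hgh,
      cdagger_X_pow_sub_one σ hσ hn]
  -- reverse of map
  set G := g.map σ with hGdef
  have hGd : G.natDegree = d := by rw [hGdef, natDegree_map]
  have hσg0 : σ (g.coeff 0) ≠ 0 := fun hc => hg0 (σ.injective (by rw [hc, map_zero]))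
  have hG0 : G.coeff 0 ≠ 0 := by
    rw [hGdef, coeff_map]; exact hσg0
  have hGne : G ≠ 0 := fun hc => by simp [hc] at hG0
  set Gr := G.reverse with hGrdef
  have hGrtr : G.natTrailingDegree = 0 :=
    natTrailingDegree_eq_zero.mpr (Or.inr hG0)
  have hGrd : Gr.natDegree = d := by
    rw [hGrdef, reverse_natDegree, hGrtr, hGd, Nat.sub_zero]
  have hGrlead : Gr.leadingCoeff = σ (g.coeff 0) := by
    rw [hGrdef, reverse_leadingCoeff, trailingCoeff, hGrtr, hGdef, coeff_map]
  have hGrne : Gr ≠ 0 := fun hc => hσg0 (by rw [← hGrlead, hc, leadingCoeff_zero])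
  set c := (σ (g.coeff 0))⁻¹ with hcdef
  have hc0 : c ≠ 0 := by
    rw [hcdef]; exact inv_ne_zero hσg0
  have hgdC : gd = Polynomial.C c * Gr := cdagger_eq σ hσ g
  have hgdd : gd.natDegree = d := by
    rw [hgdC, natDegree_mul (by simpa using hc0) hGrne, natDegree_C, hGrd, zero_add]
  have hgdM : gd.Monic := by
    rw [Monic, hgdC, leadingCoeff_mul, leadingCoeff_C, hGrlead, hcdef]
    exact inv_mul_cancel₀ hσg0
  have hgdne : gd ≠ 0 := hgdM.ne_zero
  have hhdM : hd.Monic := hgdM.of_mul_monic_left (by rw [hmul]; exact hXnM)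
  have hhdne : hd ≠ 0 := hhdM.ne_zero
  have hhdd : hd.natDegree = n - d := by
    have : n = gd.natDegree + hd.natDegree := by
      rw [← natDegree_mul hgdne hhdne, hmul, hXn1]
    omega
  have hmem : ∀ f : F[X], f ∈ C ↔ g ∣ f := by
    intro f; rw [hC]; exact Ideal.mem_span_singleton
  -- key coefficient vanishing for multiples of hd
  have hUG : ∀ u : F[X], u.degree < (n : WithBot ℕ) → hd ∣ u →
      ∀ k, d + k < n → (u * Gr).coeff (d + k) = 0 := by
    rintro u hud ⟨t, rfl⟩ k hk
    rcases eq_or_ne t 0 with rfl | ht0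
    · simp
    have htd : t.natDegree < d := by
      have h1 : (hd * t).natDegree = hd.natDegree + t.natDegree :=
        natDegree_mul hhdne ht0
      have h2 : (hd * t).natDegree < n :=
        (Polynomial.natDegree_lt_iff_degree_lt (mul_ne_zero hhdne ht0)).mpr hud
      rw [h1, hhdd] at h2
      -- (n - d) + natDegree t < n, and hd ≠ 0 so n - d correct; need d ≤ n
      omega
    have key : hd * t * Gr = Polynomial.C c⁻¹ * (t * (X ^ n - 1)) := by
      have : Gr = Polynomial.C c⁻¹ * gd := by
        rw [hgdC, ← mul_assoc, ← C_mul, inv_mul_cancel₀ hc0, C_1, one_mul]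
      rw [this, ← hmul]; ring
    rw [key, coeff_C_mul, mul_sub, coeff_sub, mul_one, coeff_mul_X_pow',
      if_neg (by omega : ¬ n ≤ d + k), coeff_eq_zero_of_natDegree_lt (by omega : t.natDegree < d + k)]
    simp
  -- HD2 : multiples of hd of degree < n are in the dual
  have HD2 : ∀ u : F[X], u.degree < (n : WithBot ℕ) → hd ∣ u →
      u ∈ hermDual (p ^ e) C n := by
    intro u hud hdvd
    refine ⟨hud, fun v hv hvd => ?_⟩
    obtain ⟨a, rfl⟩ : g ∣ v := (hmem v).mp hv
    rcases eq_or_ne a 0 with rfl | ha0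
    · simp [zero_pow (pow_ne_zero e hp.pos.ne')]
    have hvne : g * a ≠ 0 := mul_ne_zero hgne ha0
    have hand : d + a.natDegree < n := by
      have h1 : (g * a).natDegree < n :=
        (Polynomial.natDegree_lt_iff_degree_lt hvne).mpr hvd
      rw [natDegree_mul hgne ha0] at h1
      exact h1
    set A := a.map σ with hAdef
    have hAd : A.natDegree = a.natDegree := by rw [hAdef, natDegree_map]
    have hstep : ∀ i : ℕ, ((g * a).coeff i) ^ (p ^ e) = (G * A).coeff i := by
      intro i
      rw [← hσ, ← coeff_map, Polynomial.map_mul]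
    simp_rw [hstep]
    -- expand A as a sum of monomials
    have hAsum : A = ∑ k ∈ Finset.range n, Polynomial.C (A.coeff k) * X ^ k := by
      conv_lhs => rw [Polynomial.as_sum_range' A n (by rw [hAd]; omega)]
      exact Finset.sum_congr rfl fun k _ => (C_mul_X_pow_eq_monomial).symm
    have hexp : ∀ i, (G * A).coeff i
        = ∑ k ∈ Finset.range n, A.coeff k * (G * X ^ k).coeff i := by
      intro i
      conv_lhs => rw [hAsum]
      rw [Finset.mul_sum, finset_sum_coeff]
      exact Finset.sum_congr rfl fun k _ => by rw [mul_left_comm, coeff_C_mul]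
    calc ∑ i ∈ Finset.range n, u.coeff i * (G * A).coeff i
        = ∑ k ∈ Finset.range n, A.coeff k *
            ∑ i ∈ Finset.range n, u.coeff i * (G * X ^ k).coeff i := by
          simp_rw [hexp, Finset.mul_sum]
          rw [Finset.sum_comm]
          exact Finset.sum_congr rfl fun k _ => Finset.sum_congr rfl fun i _ => by ring
      _ = 0 := by
          refine Finset.sum_eq_zero fun k hk => ?_
          rcases eq_or_ne (A.coeff k) 0 with hz | hz
          · rw [hz, zero_mul]
          have hkle : k ≤ a.natDegree := by
            rw [← hAd]; exact le_natDegree_of_ne_zero hz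
          have hdk : G.natDegree + k < n := by rw [hGd]; omega
          rw [key_sum u G hdk, hGd, ← hGrdef, hUG u hud hdvd k (by omega), mul_zero]
  -- HD1 : dual elements are multiples of hd
  have HD1 : ∀ u ∈ hermDual (p ^ e) C n, hd ∣ u := by
    rintro u ⟨hud, hu⟩
    rcases eq_or_ne u 0 with rfl | hu0
    · exact dvd_zero _
    have hund : u.natDegree < n :=
      (Polynomial.natDegree_lt_iff_degree_lt hu0).mpr hud
    -- coefficient vanishing of u * Gr in the window [d, n)
    have hE : ∀ k, d + k < n → (u * Gr).coeff (d + k) = 0 := by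
      intro k hk
      have hvC : g * X ^ k ∈ C := (hmem _).mpr (dvd_mul_right g (X ^ k))
      have hvd : (g * X ^ k).degree < (n : WithBot ℕ) := by
        have hne : g * X ^ k ≠ 0 := mul_ne_zero hgne (pow_ne_zero k X_ne_zero)
        rw [← Polynomial.natDegree_lt_iff_degree_lt hne, natDegree_mul hgne
          (pow_ne_zero k X_ne_zero), natDegree_X_pow]
        omega
      have := hu (g * X ^ k) hvC hvd
      have hterm : ∀ i : ℕ, u.coeff i * ((g * X ^ k).coeff i) ^ (p ^ e)
          = u.coeff i * (G * X ^ k).coeff i := by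
        intro i
        rw [← hσ, ← coeff_map, Polynomial.map_mul, Polynomial.map_pow, map_X]
      rw [Finset.sum_congr rfl (fun i _ => hterm i)] at this
      calc (u * Gr).coeff (d + k)
          = ∑ i ∈ Finset.range n, u.coeff i * (G * X ^ k).coeff i := by
            rw [hGrdef, ← hGd]
            exact (key_sum u G (by rw [hGd]; omega)).symm
        _ = 0 := this
    -- division with remainder by X^n - 1
    set w := u * Gr with hwdef
    have hwne : w ≠ 0 := mul_ne_zero hu0 hGrne
    set P := w /ₘ (X ^ n - 1) with hPdef
    set Q := w %ₘ (X ^ n - 1) with hQdef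
    have hwQP : Q + (X ^ n - 1) * P = w := modByMonic_add_div w (X ^ n - 1)
    have hQdeg : Q.degree < (n : WithBot ℕ) := by
      have := degree_modByMonic_lt w hXnM
      rwa [show ((X : F[X]) ^ n - 1).degree = (n : WithBot ℕ) from by
        rw [degree_eq_natDegree hXn0, hXn1]] at this
    have hQnd : Q.natDegree < n := by
      rcases eq_or_ne Q 0 with hQ | hQ0
      · rw [hQ, natDegree_zero]; exact hn
      · exact (Polynomial.natDegree_lt_iff_degree_lt hQ0).mpr hQdeg
    have hwnd : w.natDegree < n + d := by
      rw [hwdef, natDegree_mul hu0 hGrne, hGrd]; omega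
    have hPnd : P.natDegree < d ∨ P = 0 := by
      rcases eq_or_ne P 0 with hP | hP0
      · exact Or.inr hP
      left
      have h1 : ((X ^ n - 1) * P).natDegree = n + P.natDegree := by
        rw [natDegree_mul hXn0 hP0, hXn1]
      have h2 : (X ^ n - 1) * P = w - Q := by rw [← hwQP]; ring
      have h3 : (w - Q).natDegree < n + d :=
        lt_of_le_of_lt (natDegree_sub_le w Q) (max_lt hwnd (by omega))
      rw [← h2, h1] at h3; omega
    have hPcoeff : ∀ i, d ≤ i → P.coeff i = 0 := by
      intro i hi
      rcases hPnd with hP | hP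
      · exact coeff_eq_zero_of_natDegree_lt (by omega)
      · rw [hP, coeff_zero]
    have hQcoeff : ∀ i, d ≤ i → Q.coeff i = 0 := by
      intro i hi
      rcases lt_or_ge i n with hin | hin
      · have hQw : Q.coeff i = w.coeff i - ((X ^ n - 1) * P).coeff i := by
          rw [← hwQP]; simp
        have hw0 : w.coeff i = 0 := by
          have := hE (i - d) (by omega)
          rwa [show d + (i - d) = i by omega] at this
        have hXP : ((X ^ n - 1) * P).coeff i = 0 := by
          rw [sub_mul, one_mul, coeff_sub, coeff_X_pow_mul', if_neg (by omega : ¬ n ≤ i),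
            hPcoeff i hi, sub_zero]
        rw [hQw, hw0, hXP, sub_zero]
      · exact coeff_eq_zero_of_natDegree_lt (by omega)
    have hQd : Q.degree < (d : WithBot ℕ) := (degree_lt_iff_coeff_zero Q d).mpr hQcoeff
    -- factor out Gr
    have hfac : Q = Gr * (u - Polynomial.C c * hd * P) := by
      have hXnfac : (X : F[X]) ^ n - 1 = Polynomial.C c * Gr * hd := by rw [← hgdC, hmul]
      have : Q = w - (X ^ n - 1) * P := by rw [← hwQP]; ring
      rw [this, hwdef, hXnfac]; ring
    have hzero : u - Polynomial.C c * hd * P = 0 := by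
      by_contra hne
      have h1 : Q ≠ 0 := by
        rw [hfac]; exact mul_ne_zero hGrne hne
      have h2 : Q.natDegree = Gr.natDegree + (u - Polynomial.C c * hd * P).natDegree := by
        rw [hfac, natDegree_mul hGrne hne]
      have h3 : Q.natDegree < d := (Polynomial.natDegree_lt_iff_degree_lt h1).mpr hQd
      rw [h2, hGrd] at h3; omega
    have hu : u = Polynomial.C c * hd * P := sub_eq_zero.mp hzero
    exact ⟨Polynomial.C c * P, by rw [hu]; ring⟩
  -- squarefreeness of X^n - 1
  have hnF : (n : F) ≠ 0 := by
    rw [Ne, CharP.cast_eq_zero_iff F p n]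
    intro hdvd
    have h1 : p ∣ Nat.gcd n (p ^ e) := Nat.dvd_gcd hdvd (dvd_pow_self p he.ne')
    have h2 : Nat.gcd n (p ^ e) = 1 := hgcd
    rw [h2] at h1
    exact hp.one_lt.ne' (Nat.dvd_one.mp h1)
  have hsq : Squarefree ((X : F[X]) ^ n - 1) :=
    (X_pow_sub_one_separable_iff.mpr hnF).squarefree
  constructor
  · -- LCD → self-conjugate-reciprocal
    intro hInt
    have hunique : ∀ u : F[X], u ∈ codewords C n ∩ hermDual (p ^ e) C n → u = 0 := by
      intro u hu
      have h0 : u ∈ ({0} : Set F[X]) := hInt ▸ hu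
      simpa using h0
    have hcop : IsCoprime g hd := by
      rw [← EuclideanDomain.gcd_isUnit_iff]
      by_contra hunit
      set D := EuclideanDomain.gcd g hd with hDdef
      have hDg : D ∣ g := EuclideanDomain.gcd_dvd_left g hd
      have hDh : D ∣ hd := EuclideanDomain.gcd_dvd_right g hd
      obtain ⟨g', hg'⟩ := hDg
      obtain ⟨h', hh'⟩ := hDh
      have hD0 : D ≠ 0 := fun hc => hgne (by rw [hg', hc, zero_mul])
      have hg'0 : g' ≠ 0 := fun hc => hgne (by rw [hg', hc, mul_zero])
      have hh'0 : h' ≠ 0 := fun hc => hhdne (by rw [hh', hc, mul_zero])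
      have hDd : 0 < D.natDegree := by
        rcases Nat.eq_zero_or_pos D.natDegree with h0 | hpos
        · exfalso
          apply hunit
          have hD : D = Polynomial.C (D.coeff 0) := Polynomial.eq_C_of_natDegree_eq_zero h0
          have hD00 : D.coeff 0 ≠ 0 := fun hc => hD0 (by rw [hD, hc, C_0])
          rw [hD]
          exact isUnit_C.mpr (IsUnit.mk0 _ hD00)
        · exact hpos
      set u := g' * hd with hudef
      have hu0 : u ≠ 0 := mul_ne_zero hg'0 hhdne
      have hgu : g ∣ u := ⟨h', by rw [hudef, hg', hh']; ring⟩
      have hg'd : g'.natDegree = d - D.natDegree := by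
        have : d = D.natDegree + g'.natDegree := by
          rw [hdDef, hg', natDegree_mul hD0 hg'0]
        omega
      have hDdn : D.natDegree ≤ d := by
        have : d = D.natDegree + g'.natDegree := by
          rw [hdDef, hg', natDegree_mul hD0 hg'0]
        omega
      have hund : u.natDegree < n := by
        rw [hudef, natDegree_mul hg'0 hhdne, hg'd, hhdd]
        omega
      have hud : u.degree < (n : WithBot ℕ) :=
        (Polynomial.natDegree_lt_iff_degree_lt hu0).mp hund
      have : u = 0 := hunique u ⟨⟨(hmem u).mpr hgu, hud⟩,
        HD2 u hud (dvd_mul_left hd g')⟩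
      exact hu0 this
    have hdvdgd : g ∣ gd := by
      refine hcop.dvd_of_dvd_mul_right ?_
      rw [hmul]; exact hgd
    obtain ⟨k, hk⟩ := hdvdgd
    have hk0 : k ≠ 0 := fun hc => hgdne (by rw [hk, hc, mul_zero])
    have hkd : k.natDegree = 0 := by
      have : gd.natDegree = d + k.natDegree := by rw [hk, natDegree_mul hgne hk0]
      rw [hgdd] at this; omega
    have hklead : k.leadingCoeff = 1 := by
      have h5 : gd.leadingCoeff = g.leadingCoeff * k.leadingCoeff := by
        rw [hk, leadingCoeff_mul]
      rw [hgdM.leadingCoeff, hg.leadingCoeff, one_mul] at h5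
      exact h5.symm
    have hk1 : k = 1 := by
      have hkC : k = Polynomial.C (k.coeff 0) := Polynomial.eq_C_of_natDegree_eq_zero hkd
      rw [leadingCoeff, hkd] at hklead
      rw [hkC, hklead, C_1]
    rw [hk, hk1, mul_one]
  · -- self-conjugate-reciprocal → LCD
    intro hself
    have hghd : g * hd = X ^ n - 1 := by rw [hself]; exact hmul
    have hcop : IsCoprime g hd := by
      have hsq' : Squarefree (g * hd) := by rw [hghd]; exact hsq
      exact isRelPrime_iff_isCoprime.mp (IsRelPrime.of_squarefree_mul hsq')
    apply Set.eq_of_subset_of_subset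
    · rintro u ⟨⟨huC, hud⟩, huD⟩
      have h1 : g ∣ u := (hmem u).mp huC
      have h2 : hd ∣ u := HD1 u huD
      have h3 : g * hd ∣ u := hcop.mul_dvd h1 h2
      rw [hghd] at h3
      rcases eq_or_ne u 0 with rfl | hu0
      · rfl
      exfalso
      have h4 : n ≤ u.natDegree := by
        have := natDegree_le_of_dvd h3 hu0
        rwa [hXn1] at this
      have h5 : u.natDegree < n :=
        (Polynomial.natDegree_lt_iff_degree_lt hu0).mpr hud
      omega
    · intro u hu
      rw [Set.mem_singleton_iff] at hu
      subst hu
      have hz : (0 : F[X]).degree < (n : WithBot ℕ) :=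
        (Polynomial.degree_lt_iff_coeff_zero 0 n).mpr fun m _ => coeff_zero m
      exact ⟨⟨C.zero_mem, hz⟩, HD2 0 hz (dvd_zero hd)⟩
end

section
/- Let q be a prime power, t ≥ 2 an integer, R = F_{q^2}[u]/⟨u^t⟩ the finite chain ring F_{q^2} + uF_{q^2} + ... + u^{t−1}F_{q^2}, and n a positive integer with gcd(n,q) = 1. Then there exists a Hermitian self-dual cyclic code of length n over R, i.e., an ideal C of R[x]/⟨x^n − 1⟩ with C = C^{⊥_H}, if and only if t is even. -/
open Polynomial

/-- The finite chain ring `R = F[u]/⟨uᵗ⟩ = F + uF + ⋯ + u^{t-1}F`. -/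
abbrev ChainR (F : Type*) [Field F] (t : ℕ) := AdjoinRoot ((X : F[X]) ^ t)

/-- The codewords of a cyclic code of length `n` over `S`, viewed as the
polynomials of degree `< n` in the ideal `C` of `S[x]` corresponding to the
ideal of `S[x]/⟨x^n - 1⟩`. -/
def codewordsR {S : Type*} [CommRing S] (C : Ideal S[X]) (n : ℕ) : Set S[X] :=
  {f | f ∈ C ∧ f.degree < (n : WithBot ℕ)}

/-- The Hermitian dual code `C^⊥H` (with respect to the conjugation `σ`),
as a set of polynomials of degree `< n`. -/
def hermDualR {S : Type*} [CommRing S] (σ : S →+* S) (C : Ideal S[X]) (n : ℕ) :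
    Set S[X] :=
  {u | u.degree < (n : WithBot ℕ) ∧ ∀ v ∈ C, v.degree < (n : WithBot ℕ) →
      ∑ i ∈ Finset.range n, u.coeff i * σ (v.coeff i) = 0}

lemma mem_codewordsR' {S : Type*} [CommRing S] {C : Ideal S[X]} {n : ℕ} {f : S[X]} :
    f ∈ codewordsR C n ↔ f ∈ C ∧ f.degree < (n : WithBot ℕ) := Iff.rfl

lemma mem_hermDualR' {S : Type*} [CommRing S] {σ : S →+* S} {C : Ideal S[X]} {n : ℕ}
    {u : S[X]} :
    u ∈ hermDualR σ C n ↔ u.degree < (n : WithBot ℕ) ∧ ∀ v ∈ C,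
      v.degree < (n : WithBot ℕ) →
      ∑ i ∈ Finset.range n, u.coeff i * σ (v.coeff i) = 0 := Iff.rfl

section Helpers

variable {F : Type*} [Field F] {t : ℕ}

lemma rootpow_eq_zero' {s : ℕ} (h : t ≤ s) :
    (AdjoinRoot.root ((X : F[X]) ^ t)) ^ s = 0 := by
  rw [← AdjoinRoot.mk_X, ← map_pow, AdjoinRoot.mk_eq_zero]
  exact pow_dvd_pow _ h

lemma rootpow_ne_zero' {s : ℕ} (h : s < t) :
    (AdjoinRoot.root ((X : F[X]) ^ t)) ^ s ≠ 0 := by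
  rw [← AdjoinRoot.mk_X, ← map_pow, Ne, AdjoinRoot.mk_eq_zero]
  intro hdvd
  have := Polynomial.natDegree_le_of_dvd hdvd (pow_ne_zero _ Polynomial.X_ne_zero)
  simp only [Polynomial.natDegree_X_pow] at this
  omega

lemma chainR_nontrivial (F : Type*) [Field F] {t : ℕ} (ht : 0 < t) :
    Nontrivial (ChainR F t) := by
  refine ⟨1, 0, ?_⟩
  have := rootpow_ne_zero' (F := F) (show 0 < t from ht)
  rwa [pow_zero] at this

lemma exists_unit_decomp' (a : AdjoinRoot ((X : F[X]) ^ t)) :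
    a = 0 ∨ ∃ k, k < t ∧ ∃ w, IsUnit w ∧
      a = (AdjoinRoot.root ((X : F[X]) ^ t)) ^ k * w := by
  obtain ⟨g, rfl⟩ := AdjoinRoot.mk_surjective a
  by_cases hg : (X : F[X]) ^ t ∣ g
  · left; rwa [AdjoinRoot.mk_eq_zero]
  · right
    have hg0 : g ≠ 0 := by rintro rfl; exact hg (dvd_zero _)
    obtain ⟨h, hgh, hnd⟩ := g.exists_eq_pow_rootMultiplicity_mul_and_not_dvd hg0 0
    rw [map_zero, sub_zero] at hgh hnd
    set k := Polynomial.rootMultiplicity 0 g with hk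
    have hkt : k < t := by
      by_contra hkt
      push_neg at hkt
      exact hg (dvd_trans (pow_dvd_pow _ hkt) ⟨h, hgh⟩)
    refine ⟨k, hkt, AdjoinRoot.mk _ h, ?_, ?_⟩
    · have hcop : IsCoprime ((X : F[X]) ^ t) h :=
        (Polynomial.irreducible_X.coprime_iff_not_dvd.mpr hnd).pow_left
      obtain ⟨c, d, hcd⟩ := hcop
      have h2 : AdjoinRoot.mk ((X : F[X]) ^ t) (c * X ^ t + d * h) = 1 := by
        rw [hcd, map_one]
      rw [map_add, map_mul, map_mul, AdjoinRoot.mk_self, mul_zero, zero_add] at h2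
      exact IsUnit.of_mul_eq_one _ (by rw [mul_comm]; exact h2)
    · rw [hgh, map_mul, map_pow, AdjoinRoot.mk_X]

lemma rootpow_dvd_of_mul_eq_zero' {m : ℕ} (hm : t = m + m)
    {a : AdjoinRoot ((X : F[X]) ^ t)}
    (ha : a * (AdjoinRoot.root ((X : F[X]) ^ t)) ^ m = 0) :
    (AdjoinRoot.root ((X : F[X]) ^ t)) ^ m ∣ a := by
  obtain ⟨g, rfl⟩ := AdjoinRoot.mk_surjective a
  rw [← AdjoinRoot.mk_X, ← map_pow, ← map_mul, AdjoinRoot.mk_eq_zero, hm, pow_add] at ha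
  obtain ⟨c, hc⟩ := ha
  have hgeq : g = X ^ m * c := by
    have hx : (X : F[X]) ^ m ≠ 0 := pow_ne_zero _ Polynomial.X_ne_zero
    apply mul_right_cancel₀ hx
    rw [hc]; ring
  exact ⟨AdjoinRoot.mk _ c, by rw [hgeq, map_mul, map_pow, AdjoinRoot.mk_X]⟩

end Helpers

theorem stmt19 {q t n : ℕ} (hq : IsPrimePow q) (ht : 2 ≤ t)
    {F : Type*} [Field F] [Fintype F] (hF : Fintype.card F = q ^ 2)
    (hn : 0 < n) (hgcd : Nat.Coprime n q)
    (σR : ChainR F t →+* ChainR F t)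
    (hσ1 : ∀ c : F, σR (AdjoinRoot.of ((X : F[X]) ^ t) c)
        = AdjoinRoot.of ((X : F[X]) ^ t) (c ^ q))
    (hσ2 : σR (AdjoinRoot.root ((X : F[X]) ^ t)) = AdjoinRoot.root ((X : F[X]) ^ t)) :
    (∃ C : Ideal (Polynomial (ChainR F t)),
        (X : Polynomial (ChainR F t)) ^ n - 1 ∈ C ∧
        codewordsR C n = hermDualR σR C n) ↔ Even t := by
  haveI : Nontrivial (ChainR F t) := chainR_nontrivial F (by omega)
  set R := ChainR F t with hR
  set r : R := AdjoinRoot.root ((X : F[X]) ^ t) with hr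
  -- n is invertible in R
  have hnR : ∃ c : R, c * (n : R) = 1 := by
    obtain ⟨p, s, hp, hs, hpq⟩ := hq
    have hpnat : p.Prime := Nat.prime_iff.mpr hp
    haveI := ringChar.charP F
    obtain ⟨n', hp'prime, hcard⟩ := FiniteField.card F (ringChar F)
    have hdvd : p ∣ Fintype.card F := by
      rw [hF, ← hpq, ← pow_mul]
      exact dvd_pow_self p (by omega)
    rw [hcard] at hdvd
    have hpp' : p = ringChar F :=
      (Nat.prime_dvd_prime_iff_eq hpnat hp'prime).mp (hpnat.dvd_of_dvd_pow hdvd)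
    have hnF : (n : F) ≠ 0 := by
      intro h0
      rw [CharP.cast_eq_zero_iff F (ringChar F) n, ← hpp'] at h0
      have hpq' : p ∣ q := by rw [← hpq]; exact dvd_pow_self p (by omega)
      have hone : p ∣ Nat.gcd n q := Nat.dvd_gcd h0 hpq'
      have hg1 : Nat.gcd n q = 1 := hgcd
      rw [hg1, Nat.dvd_one] at hone
      exact hpnat.ne_one hone
    refine ⟨AdjoinRoot.of _ ((n : F)⁻¹), ?_⟩
    have hcast : ((n : R)) = AdjoinRoot.of ((X : F[X]) ^ t) ((n : F)) :=
      (map_natCast _ n).symm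
    rw [hcast, ← map_mul, inv_mul_cancel₀ hnF, map_one]
  constructor
  · -- forward: existence implies t even
    rintro ⟨C, hXn, hC⟩
    rcases Nat.even_or_odd t with hev | hodd
    · exact hev
    exfalso
    obtain ⟨m, hm⟩ := hodd
    set e : R[X] := ∑ i ∈ Finset.range n, (X : R[X]) ^ i with he
    have hedeg : e.degree < (n : WithBot ℕ) := by
      rw [he]
      have hall : ∀ i ∈ Finset.range n, ((X : R[X]) ^ i).degree < (n : WithBot ℕ) := by
        intro i hi
        rw [Polynomial.degree_X_pow]
        exact_mod_cast Finset.mem_range.mp hi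
      exact lt_of_le_of_lt (Polynomial.degree_sum_le _ _)
        ((Finset.sup_lt_iff (show ⊥ < (n : WithBot ℕ) from WithBot.bot_lt_coe n)).mpr hall)
    have hecoeff : ∀ i, i < n → e.coeff i = 1 := by
      intro i hi
      rw [he, Polynomial.finset_sum_coeff]
      rw [Finset.sum_congr rfl (fun j _ => Polynomial.coeff_X_pow j i)]
      rw [Finset.sum_ite_eq (Finset.range n) i (fun _ => (1 : R))]
      rw [if_pos (Finset.mem_range.mpr hi)]
    -- key: for v ∈ C, C (v.eval 1) * e ∈ C
    have hkey : ∀ v ∈ C, (Polynomial.C (v.eval 1) : R[X]) * e ∈ C := by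
      intro v hv
      obtain ⟨h, hh⟩ := Polynomial.dvd_iff_isRoot.mpr
        (show (v - Polynomial.C (v.eval 1)).IsRoot 1 by
          simp [Polynomial.IsRoot])
      rw [Polynomial.C_1] at hh
      have heq : (Polynomial.C (v.eval 1) : R[X]) * e
          = e * v - ((X : R[X]) ^ n - 1) * h := by
        have h2 : ((X : R[X]) ^ n - 1) = e * ((X : R[X]) - 1) :=
          (geom_sum_mul (X : R[X]) n).symm
        calc (Polynomial.C (v.eval 1) : R[X]) * e
            = e * v - e * (v - Polynomial.C (v.eval 1)) := by ring
          _ = e * v - e * (((X : R[X]) - 1) * h) := by rw [← hh]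
          _ = e * v - ((X : R[X]) ^ n - 1) * h := by rw [h2]; ring
      rw [heq]
      exact Ideal.sub_mem _ (Ideal.mul_mem_left _ _ hv) (Ideal.mul_mem_right _ _ hXn)
    -- sum of coefficients equals eval at 1
    have hsum : ∀ w : R[X], w.degree < (n : WithBot ℕ) →
        ∑ i ∈ Finset.range n, w.coeff i = w.eval 1 := by
      intro w hw
      rcases eq_or_ne w 0 with rfl | h0
      · simp
      · rw [Polynomial.eval_eq_sum_range'
          ((Polynomial.natDegree_lt_iff_degree_lt h0).mpr hw)]
        simp
    -- P1
    have P1 : ∀ v ∈ C, ∀ w, w ∈ codewordsR C n → v.eval 1 * σR (w.eval 1) = 0 := by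
      intro v hv w hw
      have hmem : (Polynomial.C (v.eval 1) : R[X]) * e ∈ codewordsR C n := by
        refine ⟨hkey v hv, ?_⟩
        have h1 : ((Polynomial.C (v.eval 1) : R[X]) * e).degree ≤ e.degree := by
          apply le_trans (Polynomial.degree_mul_le _ _)
          calc (Polynomial.C (v.eval 1) : R[X]).degree + e.degree
              ≤ 0 + e.degree := add_le_add Polynomial.degree_C_le le_rfl
            _ = e.degree := zero_add _
        exact lt_of_le_of_lt h1 hedeg
      rw [hC] at hmem
      have hz := hmem.2 w hw.1 hw.2
      calc v.eval 1 * σR (w.eval 1)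
          = ∑ i ∈ Finset.range n, v.eval 1 * σR (w.coeff i) := by
            rw [← Finset.mul_sum, ← map_sum, hsum w hw.2]
        _ = ∑ i ∈ Finset.range n,
            ((Polynomial.C (v.eval 1) : R[X]) * e).coeff i * σR (w.coeff i) := by
            apply Finset.sum_congr rfl
            intro i hi
            rw [Polynomial.coeff_C_mul, hecoeff i (Finset.mem_range.mp hi), mul_one]
        _ = 0 := hz
    -- P2
    have P2 : ∀ a : R, (∀ w, w ∈ codewordsR C n → a * σR (w.eval 1) = 0) →
        ∃ v ∈ codewordsR C n, v.eval 1 = a := by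
      intro a ha
      obtain ⟨c, hc⟩ := hnR
      have heeval : e.eval 1 = (n : R) := by
        rw [he]
        simp [Polynomial.eval_finset_sum]
      refine ⟨Polynomial.C (a * c) * e, ?_, ?_⟩
      · rw [hC]
        refine ⟨?_, ?_⟩
        · have h1 : ((Polynomial.C (a * c) : R[X]) * e).degree ≤ e.degree := by
            apply le_trans (Polynomial.degree_mul_le _ _)
            calc (Polynomial.C (a * c) : R[X]).degree + e.degree
                ≤ 0 + e.degree := add_le_add Polynomial.degree_C_le le_rfl
              _ = e.degree := zero_add _
          exact lt_of_le_of_lt h1 hedeg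
        · intro v hv hvdeg
          calc ∑ i ∈ Finset.range n,
              ((Polynomial.C (a * c) : R[X]) * e).coeff i * σR (v.coeff i)
              = ∑ i ∈ Finset.range n, a * c * σR (v.coeff i) := by
                apply Finset.sum_congr rfl
                intro i hi
                rw [Polynomial.coeff_C_mul, hecoeff i (Finset.mem_range.mp hi), mul_one]
            _ = c * (a * σR (v.eval 1)) := by
                rw [← Finset.mul_sum, ← map_sum, hsum v hvdeg]; ring
            _ = 0 := by rw [ha v ⟨hv, hvdeg⟩, mul_zero]
      · rw [Polynomial.eval_mul, Polynomial.eval_C, heeval, mul_assoc, hc, mul_one]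
    -- now derive contradiction
    have hmnot : ¬ ∃ v ∈ codewordsR C n, v.eval 1 = r ^ m := by
      rintro ⟨v, hv, hveq⟩
      have h0 := P1 v hv.1 v hv
      rw [hveq, map_pow, hσ2, ← pow_add] at h0
      exact rootpow_ne_zero' (show m + m < t by omega) h0
    have hex : ∃ w, w ∈ codewordsR C n ∧ r ^ m * σR (w.eval 1) ≠ 0 := by
      by_contra hcon
      push_neg at hcon
      exact hmnot (P2 _ fun w hw => hcon w hw)
    obtain ⟨w, hw, hwne⟩ := hex
    have hb0 : w.eval 1 ≠ 0 := by
      rintro hb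
      rw [hb, map_zero, mul_zero] at hwne
      exact hwne rfl
    rcases exists_unit_decomp' (w.eval 1) with hb | ⟨k, hk, wu, hwu, hbeq⟩
    · exact hb0 hb
    rw [← hr] at hbeq
    have hσb : σR (w.eval 1) = r ^ k * σR wu := by
      rw [hbeq, map_mul, map_pow, hσ2]
    have hσwu : IsUnit (σR wu) := hwu.map σR
    have hkm : k ≤ m := by
      by_contra hkm
      push_neg at hkm
      apply hwne
      rw [hσb, ← mul_assoc, ← pow_add]
      have hz : r ^ (m + k) = 0 := rootpow_eq_zero' (by omega)
      rw [hz, zero_mul]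
    have hbb : w.eval 1 * σR (w.eval 1) = 0 := P1 w hw.1 w hw
    rw [hσb, hbeq] at hbb
    have h2 : (r ^ (k + k)) * (wu * σR wu) = 0 := by
      rw [pow_add, ← hbb]; ring
    have hu : IsUnit (wu * σR wu) := hwu.mul hσwu
    obtain ⟨iv, hiv⟩ := hu.exists_right_inv
    have h3 : r ^ (k + k) = 0 := by
      calc r ^ (k + k) = r ^ (k + k) * ((wu * σR wu) * iv) := by rw [hiv, mul_one]
        _ = (r ^ (k + k) * (wu * σR wu)) * iv := by ring
        _ = 0 := by rw [h2, zero_mul]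
    exact rootpow_ne_zero' (show k + k < t by omega) h3
  · -- backward: t even implies existence
    intro hteven
    obtain ⟨m, hm⟩ := hteven
    set π : R := r ^ m with hπ
    have hππ : π * π = 0 := by
      have hz : r ^ (m + m) = 0 := rootpow_eq_zero' (by omega)
      rw [hπ, ← pow_add, hz]
    have hσπ : σR π = π := by rw [hπ, map_pow, hσ2]
    refine ⟨Ideal.span {Polynomial.C π, (X : R[X]) ^ n - 1}, ?_, ?_⟩
    · exact Ideal.subset_span (by simp)
    · have hπnu : ¬ IsUnit π := by
        intro h
        exact (h.mul h).ne_zero hππ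
      haveI : Nontrivial (R ⧸ Ideal.span {π}) := by
        apply Ideal.Quotient.nontrivial_iff.mpr
        rw [Ne, Ideal.span_singleton_eq_top]
        exact hπnu
      -- key: every codeword has all coefficients divisible by π
      have key : ∀ g : R[X], g ∈ Ideal.span {Polynomial.C π, (X : R[X]) ^ n - 1} →
          g.degree < (n : WithBot ℕ) → ∀ i, π ∣ g.coeff i := by
        intro g hg hgdeg i
        rw [Ideal.mem_span_pair] at hg
        obtain ⟨a, b, hab⟩ := hg
        set φ := Ideal.Quotient.mk (Ideal.span {π}) with hφ
        have hφπ : φ π = 0 := by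
          rw [Ideal.Quotient.eq_zero_iff_mem]
          exact Ideal.subset_span rfl
        have hres : g.map φ = (b.map φ) * ((X : (R ⧸ Ideal.span {π})[X]) ^ n - 1) := by
          rw [← hab, Polynomial.map_add, Polynomial.map_mul, Polynomial.map_mul,
            Polynomial.map_sub, Polynomial.map_pow, Polynomial.map_X,
            Polynomial.map_one, Polynomial.map_C, hφπ, Polynomial.C_0, mul_zero,
            zero_add]
        have hmon : ((X : (R ⧸ Ideal.span {π})[X]) ^ n - 1).Monic := by
          have := Polynomial.monic_X_pow_sub_C (1 : R ⧸ Ideal.span {π}) hn.ne'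
          rwa [Polynomial.C_1] at this
        have hb0 : b.map φ = 0 := by
          by_contra hb
          have hdegf : ((b.map φ) * ((X : (R ⧸ Ideal.span {π})[X]) ^ n - 1)).degree
              < (n : WithBot ℕ) := by
            rw [← hres]
            exact lt_of_le_of_lt Polynomial.degree_map_le hgdeg
          rw [hmon.degree_mul] at hdegf
          have hdX : ((X : (R ⧸ Ideal.span {π})[X]) ^ n - 1).degree = (n : WithBot ℕ) := by
            have := Polynomial.degree_X_pow_sub_C hn (1 : R ⧸ Ideal.span {π})
            rwa [Polynomial.C_1] at this
          rw [hdX] at hdegf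
          have hle : (0 : WithBot ℕ) + (n : WithBot ℕ)
              ≤ (b.map φ).degree + (n : WithBot ℕ) :=
            add_le_add (Polynomial.zero_le_degree_iff.mpr hb) le_rfl
          rw [zero_add] at hle
          exact absurd (lt_of_le_of_lt hle hdegf) (lt_irrefl _)
        rw [hb0, zero_mul] at hres
        have hc0 : φ (g.coeff i) = 0 := by
          rw [← Polynomial.coeff_map, hres, Polynomial.coeff_zero]
        rw [hφ, Ideal.Quotient.eq_zero_iff_mem, Ideal.mem_span_singleton] at hc0
        exact hc0
      ext f
      rw [mem_codewordsR', mem_hermDualR']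
      constructor
      · rintro ⟨hf, hfdeg⟩
        refine ⟨hfdeg, ?_⟩
        intro v hv hvdeg
        apply Finset.sum_eq_zero
        intro i _
        obtain ⟨x, hx⟩ := key f hf hfdeg i
        obtain ⟨y, hy⟩ := key v hv hvdeg i
        rw [hx, hy, map_mul, hσπ]
        calc π * x * (π * σR y) = (π * π) * (x * σR y) := by ring
          _ = 0 := by rw [hππ, zero_mul]
      · rintro ⟨hfdeg, hf⟩
        refine ⟨?_, hfdeg⟩
        have hdvd : ∀ j, π ∣ f.coeff j := by
          intro j
          rcases lt_or_ge j n with hj | hj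
          · have hvmem : (Polynomial.C π * (X : R[X]) ^ j)
                ∈ Ideal.span {Polynomial.C π, (X : R[X]) ^ n - 1} :=
              Ideal.mul_mem_right _ _ (Ideal.subset_span (by simp))
            have hvdeg : (Polynomial.C π * (X : R[X]) ^ j).degree < (n : WithBot ℕ) := by
              have h1 : (Polynomial.C π * (X : R[X]) ^ j).degree ≤ (j : WithBot ℕ) := by
                apply le_trans (Polynomial.degree_mul_le _ _)
                rw [Polynomial.degree_X_pow]
                calc (Polynomial.C π : R[X]).degree + (j : WithBot ℕ)
                    ≤ 0 + (j : WithBot ℕ) := add_le_add Polynomial.degree_C_le le_rfl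
                  _ = (j : WithBot ℕ) := zero_add _
              exact lt_of_le_of_lt h1 (by exact_mod_cast hj)
            have hz := hf _ hvmem hvdeg
            have hsum2 : ∑ i ∈ Finset.range n,
                f.coeff i * σR ((Polynomial.C π * (X : R[X]) ^ j).coeff i)
                = f.coeff j * π := by
              rw [Finset.sum_eq_single j]
              · rw [Polynomial.coeff_C_mul, Polynomial.coeff_X_pow, if_pos rfl,
                  mul_one, hσπ]
              · intro i _ hij
                rw [Polynomial.coeff_C_mul, Polynomial.coeff_X_pow, if_neg hij,
                  mul_zero, map_zero, mul_zero]
              · intro hjn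
                exact absurd (Finset.mem_range.mpr hj) hjn
            rw [hsum2] at hz
            exact rootpow_dvd_of_mul_eq_zero' (F := F) hm hz
          · rw [Polynomial.coeff_eq_zero_of_degree_lt
              (lt_of_lt_of_le hfdeg (by exact_mod_cast hj))]
            exact dvd_zero _
        obtain ⟨g, hg⟩ := (Polynomial.C_dvd_iff_dvd_coeff π f).mpr hdvd
        rw [hg]
        exact Ideal.mul_mem_right _ _ (Ideal.subset_span (by simp))
end
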